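/- If a graph G has a k-walk, then G is 1/k-tough. -/

import Mathlib

def Tough {V : Type*} (G : SimpleGraph V) (β : ℝ) : Prop :=
  ∀ S : Set V, 1 < Nat.card ((G.induce Sᶜ).ConnectedComponent) →
    β * (Nat.card ((G.induce Sᶜ).ConnectedComponent) : ℝ) ≤ (Nat.card S : ℝ)

/-- `G` has a `k`-walk: a spanning closed walk visiting each vertex at most `k`
times. -/
def HasKWalk {V : Type*} [DecidableEq V] (G : SimpleGraph V) (k : ℕ) : Prop :=
  ∃ (v : V) (w : G.Walk v v), (∀ x : V, x ∈ w.support) ∧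
    ∀ x : V, (w.support.tail).count x ≤ k

/-- The number of indices of a list at which a given value sits equals its count. -/
theorem count_filter_fin {α : Type*} [DecidableEq α] (l : List α) (a : α) :
    (Finset.univ.filter fun i : Fin l.length => l.get i = a).card = l.count a := by
  induction l with
  | nil => simp
  | cons b t ih =>
    rw [Finset.card_filter]
    show (∑ i : Fin (t.length + 1), if (b :: t).get i = a then 1 else 0) = _
    rw [Fin.sum_univ_succ, ← Finset.card_filter]
    simp only [List.count_cons, List.get, Fin.eta, List.get_cons_succ']
    rw [ih]
    by_cases hba : b = a
    · simp [hba, add_comm]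
    · simp [hba, Ne.symm hba, fun h : (b == a) = true => hba (by simpa using h)]

/-- If a predicate fails at `a` and holds at `b ≥ a`, there is a transition point. -/
theorem exists_transition {P : ℕ → Prop} :
    ∀ {a b : ℕ}, a ≤ b → ¬ P a → P b → ∃ m, a < m ∧ m ≤ b ∧ P m ∧ ¬ P (m - 1) := by
  intro a b
  induction b with
  | zero =>
    intro hab ha hb
    exact absurd hb (by simpa [Nat.le_zero.mp hab] using ha)
  | succ b ih =>
    intro hab ha hb
    by_cases hPb : P b
    · have hab' : a ≤ b := by
        by_contra hcon
        have : a = b + 1 := by omega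
        exact ha (by rw [this]; exact hb)
      obtain ⟨m, h1, h2, h3, h4⟩ := ih hab' ha hPb
      exact ⟨m, h1, h2.trans (Nat.le_succ b), h3, h4⟩
    · have hab' : a ≠ b + 1 := fun h => ha (h ▸ hb)
      exact ⟨b + 1, by omega, le_refl _, hb, by simpa⟩

/-- A list whose last element is `a` is a permutation of `a` prepended to its `dropLast`. -/
theorem perm_cons_dropLast {α : Type*} :
    ∀ (l : List α) (a : α), l.getLast? = some a → l.Perm (a :: l.dropLast) := by
  intro l
  induction l with
  | nil => intro a h; simp at h
  | cons b u ih =>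
    intro a h
    cases u with
    | nil => simp at h ⊢; simp [h]
    | cons c u' =>
      rw [List.getLast?_cons_cons] at h
      have h1 : (b :: c :: u').Perm (b :: a :: (c :: u').dropLast) := (ih a h).cons b
      have h2 : (b :: a :: (c :: u').dropLast).Perm (a :: b :: (c :: u').dropLast) :=
        List.Perm.swap _ _ _
      have h3 : a :: b :: (c :: u').dropLast = a :: (b :: c :: u').dropLast := by simp
      exact (h1.trans h2).trans (h3 ▸ List.Perm.refl _)

/-- The dropLast of the support of a closed walk has the same counts as its tail. -/
theorem count_dropLast_support {V : Type*} [DecidableEq V] {G : SimpleGraph V} {v : V}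
    (w : G.Walk v v) (x : V) :
    w.support.dropLast.count x = w.support.tail.count x := by
  have hne : w.support ≠ [] := w.support_ne_nil
  have hl? : w.support.getLast? = some v := by
    rw [List.getLast?_eq_getLast hne, w.getLast_support]
  have hperm := perm_cons_dropLast w.support v hl?
  have hc := hperm.count_eq x
  conv_lhs at hc => rw [w.support_eq_cons]
  rw [List.count_cons, List.count_cons] at hc
  omega

/-- If a graph has a `k`-walk then it is `1/k`-tough. -/
theorem stmt_14 {V : Type*} [Fintype V] [DecidableEq V] (G : SimpleGraph V)
    (k : ℕ) (hk : 0 < k) (h : HasKWalk G k) : Tough G (1 / (k : ℝ)) := by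
  classical
  intro S hS
  obtain ⟨v, w, hcov, hcnt⟩ := h
  set l' : List V := w.support.dropLast with hl'
  set m : ℕ := l'.length with hm
  have hslen : w.support.length = w.length + 1 := w.length_support
  have hmlen : m = w.length := by
    rw [hm, hl', List.length_dropLast, hslen]
    omega
  have hsm : w.support.length = m + 1 := by rw [hslen, hmlen]
  -- the "previous" vertex map
  have hget : ∀ i : Fin m, l'.get i = w.support.get ⟨i.1, by omega⟩ := by
    intro i
    simp [hl', List.getElem_dropLast]
  -- there are at least two components
  have hnt : Nontrivial ((G.induce Sᶜ).ConnectedComponent) :=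
    Finite.one_lt_card_iff_nontrivial.mp hS
  -- m ≥ 1
  have hm1 : 1 ≤ m := by
    obtain ⟨C, D, hCD⟩ := hnt
    obtain ⟨c, hc⟩ := C.exists_rep
    obtain ⟨d, hd⟩ := D.exists_rep
    have hcd : (c : V) ≠ (d : V) := by
      intro hcd
      exact hCD (by rw [← hc, ← hd]; congr 1; exact Subtype.ext hcd)
    by_contra hm0
    have hm0' : w.length = 0 := by omega
    have hc' : (c : V) ∈ w.support := hcov c
    have hd' : (d : V) ∈ w.support := hcov d
    rw [w.support_eq_cons] at hc' hd'
    have htail : w.support.tail = [] := by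
      have h2 : w.support.tail.length = 0 := by
        have := List.length_tail (l := w.support)
        omega
      exact List.length_eq_zero_iff.mp h2
    rw [htail] at hc' hd'
    simp at hc' hd'
    exact hcd (hc'.trans hd'.symm)
  -- the function giving support vertices
  set F : ℕ → V := fun j => w.support.getD j v with hF
  have hFget : ∀ (j : ℕ) (hj : j < w.support.length), F j = w.support.get ⟨j, hj⟩ := by
    intro j hj
    show w.support.getD j v = _
    rw [List.getD_eq_getElem _ _ hj]
    rfl
  have hF0 : F 0 = v := by
    show w.support.getD 0 v = v
    rw [w.support_eq_cons]
    rfl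
  have hFm : F m = v := by
    show w.support.getD m v = v
    rw [List.getD_eq_getElem _ _ (by omega)]
    have hgl := w.getLast_support
    rw [List.getLast_eq_getElem] at hgl
    convert hgl using 2
    omega
  -- chain of adjacencies
  have hadj : ∀ (j : ℕ), j + 1 < w.support.length → G.Adj (F j) (F (j + 1)) := by
    intro j hj
    have hchain := w.isChain_adj_support
    rw [List.isChain_iff_getElem] at hchain
    have := hchain j (by omega)
    rwa [hFget j (by omega), hFget (j+1) (by omega)]
  -- key existence: each component has an "entry point"
  have hkey : ∀ C : (G.induce Sᶜ).ConnectedComponent, ∃ i : Fin m,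
      l'.get i ∈ S ∧ ∃ hc : F (i.1 + 1) ∈ Sᶜ,
        (G.induce Sᶜ).connectedComponentMk ⟨F (i.1 + 1), hc⟩ = C := by
    intro C
    set P : ℕ → Prop := fun j => ∃ hc : F j ∈ Sᶜ,
      (G.induce Sᶜ).connectedComponentMk ⟨F j, hc⟩ = C with hP
    -- a representative of C appears in the support
    obtain ⟨c, hc⟩ := C.exists_rep
    obtain ⟨jc, hjc⟩ := List.mem_iff_get.mp (hcov (c : V))
    have hjc2 := jc.2
    have hFjc : F jc.1 = (c : V) := by
      rw [hFget jc.1 jc.2]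
      simp only [Fin.eta]
      exact hjc
    have hPc : P jc.1 := by
      refine ⟨by rw [hFjc]; exact c.2, ?_⟩
      rw [← hc]
      congr 1
      exact Subtype.ext hFjc
    -- another component D with a representative
    obtain ⟨D, hD⟩ := exists_ne C
    obtain ⟨d, hd⟩ := D.exists_rep
    obtain ⟨jd, hjd⟩ := List.mem_iff_get.mp (hcov (d : V))
    have hjd2 := jd.2
    have hFjd : F jd.1 = (d : V) := by
      rw [hFget jd.1 jd.2]
      simp only [Fin.eta]
      exact hjd
    have hPd : ¬ P jd.1 := by
      rintro ⟨hc1, hc2⟩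
      apply hD
      rw [← hd, ← hc2]
      congr 1
      exact Subtype.ext hFjd.symm
    -- get a transition point
    have htrans : ∃ m0, 1 ≤ m0 ∧ m0 ≤ m ∧ P m0 ∧ ¬ P (m0 - 1) := by
      by_cases hP0 : P 0
      · have hPm : P m := by
          obtain ⟨hc1, hc2⟩ := hP0
          have hFF : F m = F 0 := by rw [hF0, hFm]
          refine ⟨by rw [hFF]; exact hc1, ?_⟩
          rw [← hc2]
          congr 1
          exact Subtype.ext hFF
        obtain ⟨m0, h1, h2, h3, h4⟩ := exists_transition
          (show jd.1 ≤ m by omega) hPd hPm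
        exact ⟨m0, by omega, h2, h3, h4⟩
      · obtain ⟨m0, h1, h2, h3, h4⟩ := exists_transition
          (show 0 ≤ jc.1 by omega) hP0 hPc
        exact ⟨m0, by omega, by omega, h3, h4⟩
    obtain ⟨m0, hm01, hm0m, hPm0, hPm0'⟩ := htrans
    refine ⟨⟨m0 - 1, by omega⟩, ?_, ?_⟩
    · -- the previous vertex is in S
      by_contra hgS
      apply hPm0'
      have hgSc : l'.get ⟨m0 - 1, by omega⟩ ∈ Sᶜ := hgS
      rw [hget ⟨m0 - 1, by omega⟩] at hgSc
      have hFprev : F (m0 - 1) = w.support.get ⟨m0 - 1, by omega⟩ :=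
        hFget (m0 - 1) (by omega)
      have hprevSc : F (m0 - 1) ∈ Sᶜ := by rw [hFprev]; exact hgSc
      obtain ⟨hcur, hcomp⟩ := hPm0
      have hadj' : G.Adj (F (m0 - 1)) (F m0) := by
        have := hadj (m0 - 1) (by omega)
        rwa [show m0 - 1 + 1 = m0 by omega] at this
      have hreach : ((G.induce Sᶜ).connectedComponentMk ⟨F (m0 - 1), hprevSc⟩ : _)
          = (G.induce Sᶜ).connectedComponentMk ⟨F m0, hcur⟩ :=
        SimpleGraph.ConnectedComponent.sound
          (SimpleGraph.Adj.reachable (by exact hadj'))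
      exact ⟨hprevSc, hreach.trans hcomp⟩
    · -- the next vertex is in C
      obtain ⟨hcur, hcomp⟩ := hPm0
      have heq : (⟨m0 - 1, by omega⟩ : Fin m).1 + 1 = m0 := by
        show m0 - 1 + 1 = m0
        omega
      rw [heq]
      exact ⟨hcur, hcomp⟩
  -- choose the entry points
  choose f hf1 hf2 using hkey
  -- f is injective into the set of indices in S
  set A : Finset (Fin m) := Finset.univ.filter (fun i => l'.get i ∈ S) with hA
  have hfA : ∀ C, f C ∈ A := by
    intro C
    rw [hA, Finset.mem_filter]
    exact ⟨Finset.mem_univ _, hf1 C⟩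
  have hfinj : Function.Injective f := by
    intro C D hCD
    obtain ⟨hc1, hc2⟩ := hf2 C
    obtain ⟨hd1, hd2⟩ := hf2 D
    rw [← hc2, ← hd2]
    congr 1
    refine Subtype.ext ?_
    show F ((f C).1 + 1) = F ((f D).1 + 1)
    rw [hCD]
  -- count the components
  have hcard1 : Nat.card ((G.induce Sᶜ).ConnectedComponent) ≤ A.card := by
    have hinj' : Function.Injective (fun C => (⟨f C, hfA C⟩ : A)) := by
      intro C D hCD
      exact hfinj (by simpa using hCD)
    calc Nat.card ((G.induce Sᶜ).ConnectedComponent) ≤ Nat.card A :=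
          Nat.card_le_card_of_injective _ hinj'
      _ = A.card := Nat.card_eq_finsetCard A
  -- A has at most k * |S| elements
  have hcard2 : A.card ≤ k * S.toFinset.card := by
    apply Finset.card_le_mul_card_image_of_maps_to (f := fun i => l'.get i)
    · intro i hi
      rw [hA, Finset.mem_filter] at hi
      exact Set.mem_toFinset.mpr hi.2
    · intro a _
      calc (A.filter fun i => l'.get i = a).card
          ≤ (Finset.univ.filter fun i : Fin m => l'.get i = a).card := by
            apply Finset.card_le_card
            intro i hi
            rw [Finset.mem_filter] at hi ⊢
            exact ⟨Finset.mem_univ _, hi.2⟩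
        _ = l'.count a := count_filter_fin l' a
        _ = w.support.tail.count a := count_dropLast_support w a
        _ ≤ k := hcnt a
  have hScard : Nat.card S = S.toFinset.card := Nat.card_eq_card_toFinset S
  have hfinal : Nat.card ((G.induce Sᶜ).ConnectedComponent) ≤ k * Nat.card S := by
    rw [hScard]
    exact hcard1.trans hcard2
  -- conclude the real inequality
  have hk' : (0 : ℝ) < k := by exact_mod_cast hk
  rw [div_mul_eq_mul_div, one_mul, div_le_iff₀ hk']
  calc (Nat.card ((G.induce Sᶜ).ConnectedComponent) : ℝ)
      ≤ (k * Nat.card S : ℕ) := by exact_mod_cast hfinal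
    _ = (Nat.card S : ℝ) * k := by push_cast; ring
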